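/- Let N ≥ 2 be an even integer. For every N-qubit density matrix ρ, each trace Tr(ρ σ_j^{⊗N}) (j = 1,2,3) is a real number, and the image of the map ρ ↦ (Re Tr(ρσ₁^{⊗N}), Re Tr(ρσ₂^{⊗N}), Re Tr(ρσ₃^{⊗N})), taken over all N-qubit density matrices ρ, is exactly the tetrahedron T_{(−1)^{N/2}}, i.e. the convex hull in ℝ³ of the four points (1,(−1)^{N/2},1), (−1,−(−1)^{N/2},1), (1,−(−1)^{N/2},−1), (−1,(−1)^{N/2},−1). -/

import Mathlib

open Matrix BigOperators Polynomial
open scoped ComplexOrder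

/-- The three Pauli matrices. -/
noncomputable def pauli : Fin 3 → Matrix (Fin 2) (Fin 2) ℂ :=
  ![!![0, 1; 1, 0], !![0, -Complex.I; Complex.I, 0], !![1, 0; 0, -1]]

/-- The `N`-fold Kronecker power of a 2×2 matrix, with rows and columns indexed by
`Fin N → Fin 2` (the `N`-qubit computational basis). -/
noncomputable def kronPow (A : Matrix (Fin 2) (Fin 2) ℂ) (N : ℕ) :
    Matrix (Fin N → Fin 2) (Fin N → Fin 2) ℂ :=
  Matrix.of fun i j => ∏ k, A (i k) (j k)

/-- The `M³_N` state `ϖ(c) = 2^{-N} (I + c₁ σ₁^{⊗N} + c₂ σ₂^{⊗N} + c₃ σ₃^{⊗N})`. -/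
noncomputable def Mstate (N : ℕ) (c : Fin 3 → ℝ) :
    Matrix (Fin N → Fin 2) (Fin N → Fin 2) ℂ :=
  ((2 : ℂ) ^ N)⁻¹ • (1 + ∑ j : Fin 3, (c j : ℂ) • kronPow (pauli j) N)


/-- The tetrahedron `T_s`: convex hull of `(1,s,1), (−1,−s,1), (1,−s,−1), (−1,s,−1)`. -/
noncomputable def tet (s : ℝ) : Set (Fin 3 → ℝ) :=
  convexHull ℝ {![1, s, 1], ![-1, -s, 1], ![1, -s, -1], ![-1, s, -1]}

/-! ### Auxiliary lemmas -/

lemma kronPow_mul (A B : Matrix (Fin 2) (Fin 2) ℂ) (N : ℕ) :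
    kronPow A N * kronPow B N = kronPow (A * B) N := by
  ext i j
  simp only [kronPow, Matrix.mul_apply, Matrix.of_apply]
  rw [Finset.prod_univ_sum]
  rw [← Fintype.sum_equiv (Equiv.refl (Fin N → Fin 2)) _ _ (fun k => rfl)]
  exact Finset.sum_congr rfl fun k _ => (Finset.prod_mul_distrib).symm

lemma kronPow_one (N : ℕ) : kronPow (1 : Matrix (Fin 2) (Fin 2) ℂ) N = 1 := by
  ext i j
  simp only [kronPow, Matrix.of_apply, Matrix.one_apply]
  by_cases h : i = j
  · subst h; simp
  · rw [if_neg h]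
    obtain ⟨k, hk⟩ := Function.ne_iff.mp h
    exact Finset.prod_eq_zero (Finset.mem_univ k) (by simp [hk])

lemma kronPow_smul (c : ℂ) (A : Matrix (Fin 2) (Fin 2) ℂ) (N : ℕ) :
    kronPow (c • A) N = c ^ N • kronPow A N := by
  ext i j
  simp [kronPow, Finset.prod_mul_distrib]

lemma trace_kronPow (A : Matrix (Fin 2) (Fin 2) ℂ) (N : ℕ) :
    (kronPow A N).trace = A.trace ^ N := by
  simp only [Matrix.trace, Matrix.diag, kronPow, Matrix.of_apply]
  have : (∑ x : Fin 2, A x x) ^ N = ∏ _k : Fin N, (∑ x : Fin 2, A x x) := by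
    rw [Finset.prod_const, Finset.card_univ, Fintype.card_fin]
  rw [this, Finset.prod_univ_sum]
  exact Fintype.sum_equiv (Equiv.refl _) _ _ (fun k => rfl)

lemma kronPow_conjTranspose (A : Matrix (Fin 2) (Fin 2) ℂ) (N : ℕ) :
    (kronPow A N)ᴴ = kronPow Aᴴ N := by
  ext i j
  simp [kronPow, Matrix.conjTranspose_apply]

lemma pauli_mul_self (j : Fin 3) : pauli j * pauli j = 1 := by
  fin_cases j <;> ext a b <;> fin_cases a <;> fin_cases b <;>
    simp [pauli, Matrix.mul_apply, Fin.sum_univ_two, Complex.I_mul_I]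

lemma pauli_conjTranspose (j : Fin 3) : (pauli j)ᴴ = pauli j := by
  fin_cases j <;> ext a b <;> fin_cases a <;> fin_cases b <;>
    simp [pauli, Matrix.conjTranspose_apply]

lemma pauli01 : pauli 0 * pauli 1 = Complex.I • pauli 2 := by
  ext a b; fin_cases a <;> fin_cases b <;>
    simp [pauli, Matrix.mul_apply, Fin.sum_univ_two]
lemma pauli10 : pauli 1 * pauli 0 = (-Complex.I) • pauli 2 := by
  ext a b; fin_cases a <;> fin_cases b <;>
    simp [pauli, Matrix.mul_apply, Fin.sum_univ_two]
lemma pauli12 : pauli 1 * pauli 2 = Complex.I • pauli 0 := by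
  ext a b; fin_cases a <;> fin_cases b <;>
    simp [pauli, Matrix.mul_apply, Fin.sum_univ_two]
lemma pauli21 : pauli 2 * pauli 1 = (-Complex.I) • pauli 0 := by
  ext a b; fin_cases a <;> fin_cases b <;>
    simp [pauli, Matrix.mul_apply, Fin.sum_univ_two]
lemma pauli20 : pauli 2 * pauli 0 = Complex.I • pauli 1 := by
  ext a b; fin_cases a <;> fin_cases b <;>
    simp [pauli, Matrix.mul_apply, Fin.sum_univ_two]
lemma pauli02 : pauli 0 * pauli 2 = (-Complex.I) • pauli 1 := by
  ext a b; fin_cases a <;> fin_cases b <;>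
    simp [pauli, Matrix.mul_apply, Fin.sum_univ_two]

lemma proj_sq (N : ℕ) (hN : Even N) (s : ℂ) (hs : Complex.I ^ N = s)
    (e : Fin 3 → ℂ) (he : ∀ j, e j * e j = 1) (hprod : e 0 * e 1 * e 2 = s) :
    (1 + (e 0 • kronPow (pauli 0) N + e 1 • kronPow (pauli 1) N + e 2 • kronPow (pauli 2) N)) *
    (1 + (e 0 • kronPow (pauli 0) N + e 1 • kronPow (pauli 1) N + e 2 • kronPow (pauli 2) N)) =
    (4:ℂ) • (1 + (e 0 • kronPow (pauli 0) N + e 1 • kronPow (pauli 1) N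
      + e 2 • kronPow (pauli 2) N)) := by
  have hsneg : (-Complex.I) ^ N = s := by rw [hN.neg_pow, hs]
  have h00 := kronPow_mul (pauli 0) (pauli 0) N
  rw [pauli_mul_self, kronPow_one] at h00
  have h11 := kronPow_mul (pauli 1) (pauli 1) N
  rw [pauli_mul_self, kronPow_one] at h11
  have h22 := kronPow_mul (pauli 2) (pauli 2) N
  rw [pauli_mul_self, kronPow_one] at h22
  have h01 := kronPow_mul (pauli 0) (pauli 1) N
  rw [pauli01, kronPow_smul, hs] at h01
  have h10 := kronPow_mul (pauli 1) (pauli 0) N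
  rw [pauli10, kronPow_smul, hsneg] at h10
  have h12 := kronPow_mul (pauli 1) (pauli 2) N
  rw [pauli12, kronPow_smul, hs] at h12
  have h21 := kronPow_mul (pauli 2) (pauli 1) N
  rw [pauli21, kronPow_smul, hsneg] at h21
  have h20 := kronPow_mul (pauli 2) (pauli 0) N
  rw [pauli20, kronPow_smul, hs] at h20
  have h02 := kronPow_mul (pauli 0) (pauli 2) N
  rw [pauli02, kronPow_smul, hsneg] at h02
  have k0 : e 1 * e 2 * s = e 0 := by
    linear_combination (-(e 1 * e 2)) * hprod + (e 0 * e 2 * e 2) * (he 1) + (e 0) * (he 2)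
  have k1 : e 0 * e 2 * s = e 1 := by
    linear_combination (-(e 0 * e 2)) * hprod + (e 1 * e 2 * e 2) * (he 0) + (e 1) * (he 2)
  have k2 : e 0 * e 1 * s = e 2 := by
    linear_combination (-(e 0 * e 1)) * hprod + (e 2 * e 1 * e 1) * (he 0) + (e 2) * (he 1)
  simp only [add_mul, mul_add, smul_mul_assoc, mul_smul_comm, smul_smul, one_mul, mul_one,
    h00, h11, h22, h01, h10, h12, h21, h20, h02]
  match_scalars
  · linear_combination he 0 + he 1 + he 2
  · linear_combination 2 * k0
  · linear_combination 2 * k1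
  · linear_combination 2 * k2

lemma trace_re_nonneg {n : Type*} [Fintype n] [DecidableEq n]
    {M : Matrix n n ℂ} (hM : M.PosSemidef) : 0 ≤ M.trace.re := by
  have h : ∀ i, 0 ≤ (M i i).re := by
    intro i
    have h2 := hM.dotProduct_mulVec_nonneg (Pi.single i 1)
    have h3 : star (Pi.single i 1 : n → ℂ) ⬝ᵥ M *ᵥ Pi.single i 1 = M i i := by
      simp [Matrix.mulVec_single, dotProduct, Pi.single_apply, apply_ite (star ·),
        Finset.sum_ite_eq']
    rw [h3] at h2
    exact (Complex.le_def.mp h2).1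
  rw [Matrix.trace, Complex.re_sum]
  exact Finset.sum_nonneg fun i _ => h i

lemma trace_mul_re_nonneg {n : Type*} [Fintype n] [DecidableEq n]
    {ρ M : Matrix n n ℂ} (hρ : ρ.PosSemidef) (hM : M.PosSemidef) :
    0 ≤ ((ρ * M).trace).re := by
  obtain ⟨B, rfl⟩ : ∃ B : Matrix n n ℂ, M = Bᴴ * B := by
    open scoped MatrixOrder in
    exact CStarAlgebra.nonneg_iff_eq_star_mul_self.mp hM.nonneg
  rw [← Matrix.mul_assoc, Matrix.trace_mul_cycle]
  exact trace_re_nonneg (hρ.mul_mul_conjTranspose_same B)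

lemma psd_of_herm_sq {n : Type*} [Fintype n] [DecidableEq n] {M : Matrix n n ℂ}
    (hH : Mᴴ = M) (hsq : M * M = (4:ℂ) • M) : M.PosSemidef := by
  have key : M = (((1/2:ℝ):ℂ) • M)ᴴ * (((1/2:ℝ):ℂ) • M) := by
    rw [Matrix.conjTranspose_smul, hH, Matrix.smul_mul, Matrix.mul_smul, hsq,
      smul_smul, smul_smul]
    rw [show (star ((1/2:ℝ):ℂ) * ((1/2:ℝ):ℂ) * 4) = 1 by
      rw [Complex.star_def, Complex.conj_ofReal]; norm_num, one_smul]
  rw [key]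
  exact Matrix.posSemidef_conjTranspose_mul_self _

lemma psd_smul {n : Type*} [Fintype n] [DecidableEq n] {M : Matrix n n ℂ}
    (hM : M.PosSemidef) {r : ℝ} (hr : 0 ≤ r) : ((r:ℂ) • M).PosSemidef := by
  refine Matrix.PosSemidef.of_dotProduct_mulVec_nonneg ?_ fun x => ?_
  · unfold Matrix.IsHermitian
    rw [Matrix.conjTranspose_smul, hM.1.eq, Complex.star_def, Complex.conj_ofReal]
  · rw [Matrix.smul_mulVec, dotProduct_smul, smul_eq_mul]
    exact mul_nonneg (Complex.zero_le_real.mpr hr) (hM.dotProduct_mulVec_nonneg x)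

lemma pauli_trace_mul (k j : Fin 3) :
    (pauli k * pauli j).trace = if k = j then 2 else 0 := by
  fin_cases k <;> fin_cases j <;>
    simp [pauli, Matrix.trace, Matrix.mul_apply, Fin.sum_univ_two, Complex.I_mul_I,
      Complex.ext_iff] <;> norm_num

lemma trace_one_qubits (N : ℕ) :
    (1 : Matrix (Fin N → Fin 2) (Fin N → Fin 2) ℂ).trace = (2:ℂ)^N := by
  rw [Matrix.trace_one]
  simp [Fintype.card_fun]

lemma trace_Mstate (N : ℕ) (hN : N ≠ 0) (c : Fin 3 → ℝ) : (Mstate N c).trace = 1 := by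
  rw [Mstate, Matrix.trace_smul, Matrix.trace_add, trace_one_qubits, Matrix.trace_sum]
  have h : ∀ j : Fin 3, ((c j : ℂ) • kronPow (pauli j) N).trace = 0 := by
    intro j
    rw [Matrix.trace_smul, trace_kronPow]
    have : (pauli j).trace = 0 := by
      fin_cases j <;> simp [pauli, Matrix.trace, Fin.sum_univ_two]
    rw [this, zero_pow hN, smul_zero]
  rw [Finset.sum_congr rfl (fun j _ => h j), Finset.sum_const]
  simp [smul_eq_mul, inv_mul_cancel₀ (pow_ne_zero N (two_ne_zero (α := ℂ)))]

lemma trace_Mstate_mul (N : ℕ) (hN : N ≠ 0) (c : Fin 3 → ℝ) (j : Fin 3) :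
    (Mstate N c * kronPow (pauli j) N).trace = (c j : ℂ) := by
  rw [Mstate, Matrix.smul_mul, Matrix.trace_smul, add_mul, one_mul, Finset.sum_mul,
    Matrix.trace_add, Matrix.trace_sum]
  have h1 : (kronPow (pauli j) N).trace = 0 := by
    rw [trace_kronPow]
    have : (pauli j).trace = 0 := by
      fin_cases j <;> simp [pauli, Matrix.trace, Fin.sum_univ_two]
    rw [this, zero_pow hN]
  have h2 : ∀ k : Fin 3, ((c k : ℂ) • kronPow (pauli k) N * kronPow (pauli j) N).trace
      = if k = j then (c k : ℂ) * 2^N else 0 := by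
    intro k
    rw [Matrix.smul_mul, Matrix.trace_smul, kronPow_mul, trace_kronPow, pauli_trace_mul]
    by_cases h : k = j
    · simp [h]
    · simp [h, zero_pow hN]
  rw [Finset.sum_congr rfl (fun k _ => h2 k), Finset.sum_ite_eq', h1]
  simp [smul_eq_mul]
  rw [mul_comm ((c j : ℂ)) _, ← mul_assoc, inv_mul_cancel₀ (pow_ne_zero _ two_ne_zero), one_mul]

lemma tet_eq (s : ℝ) (hs : s = 1 ∨ s = -1) :
    tet s = {x : Fin 3 → ℝ |
      0 ≤ 1 + (x 0 + s * x 1 + x 2) ∧ 0 ≤ 1 + (-x 0 - s * x 1 + x 2) ∧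
      0 ≤ 1 + (x 0 - s * x 1 - x 2) ∧ 0 ≤ 1 + (-x 0 + s * x 1 - x 2)} := by
  have hs2 : s * s = 1 := by rcases hs with rfl | rfl <;> norm_num
  apply Set.Subset.antisymm
  · apply convexHull_min
    · intro p hp
      simp only [Set.mem_insert_iff, Set.mem_singleton_iff] at hp
      rcases hp with rfl | rfl | rfl | rfl <;>
        refine ⟨?_, ?_, ?_, ?_⟩ <;>
        · simp only [Set.mem_setOf_eq, Matrix.cons_val_zero, Matrix.cons_val_one,
            Matrix.head_cons, Matrix.cons_val_two, Matrix.tail_cons]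
          nlinarith [hs2]
    · rintro x ⟨hx1, hx2, hx3, hx4⟩ y ⟨hy1, hy2, hy3, hy4⟩ a b ha hb hab
      refine ⟨?_, ?_, ?_, ?_⟩ <;>
      · simp only [Set.mem_setOf_eq, Pi.add_apply, Pi.smul_apply, smul_eq_mul]
        nlinarith
  · rintro x ⟨h1, h2, h3, h4⟩
    have hmem : ∑ i : Fin 4,
        (![(1 + (x 0 + s*x 1 + x 2))/4, (1 + (-x 0 - s*x 1 + x 2))/4,
           (1 + (x 0 - s*x 1 - x 2))/4, (1 + (-x 0 + s*x 1 - x 2))/4] : Fin 4 → ℝ) i •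
        (![![1, s, 1], ![-1, -s, 1], ![1, -s, -1], ![-1, s, -1]] : Fin 4 → (Fin 3 → ℝ)) i
        ∈ tet s := by
      apply (convex_convexHull ℝ _).sum_mem
      · intro i _; fin_cases i <;> simp <;> linarith
      · simp [Fin.sum_univ_four]; ring
      · intro i _
        apply subset_convexHull
        fin_cases i <;> simp [Set.mem_insert_iff]
    convert hmem using 1
    funext j
    fin_cases j <;>
      simp [Fin.sum_univ_four, Matrix.vecHead, Matrix.vecTail] <;>
      first
        | ring1
        | linear_combination (x 1) * hs2
        | linear_combination (-(x 1)) * hs2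
        | linear_combination (x 1 / 4) * hs2
        | linear_combination (-(x 1) / 4) * hs2

lemma mstate_psd (N : ℕ) (hN : Even N) (hNne : N ≠ 0) (s : ℝ) (hI : Complex.I ^ N = (s:ℂ))
    (e : Fin 3 → ℝ) (he : ∀ j, e j = 1 ∨ e j = -1) (hprod : e 0 * e 1 * e 2 = s) :
    (Mstate N e).PosSemidef := by
  have hcast : ((2:ℂ)^N)⁻¹ = ((((2:ℝ)^N)⁻¹ : ℝ) : ℂ) := by push_cast; ring
  rw [Mstate, Fin.sum_univ_three, hcast]
  refine psd_smul (psd_of_herm_sq ?_ ?_) (by positivity)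
  · simp only [Matrix.conjTranspose_add, Matrix.conjTranspose_smul, Matrix.conjTranspose_one,
      kronPow_conjTranspose, pauli_conjTranspose, Complex.star_def, Complex.conj_ofReal]
  · exact proj_sq N hN (s:ℂ) hI (fun j => ((e j : ℝ) : ℂ))
      (fun j => by rcases he j with h | h <;> simp [h])
      (by show (e 0:ℂ)*(e 1:ℂ)*(e 2:ℂ) = _; exact_mod_cast hprod)

theorem stmt6 (N : ℕ) (hN : Even N) (hN2 : 2 ≤ N) :
    (∀ ρ : Matrix (Fin N → Fin 2) (Fin N → Fin 2) ℂ, ρ.PosSemidef → ρ.trace = 1 →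
      ∀ j : Fin 3, ((ρ * kronPow (pauli j) N).trace).im = 0) ∧
    {x : Fin 3 → ℝ | ∃ ρ : Matrix (Fin N → Fin 2) (Fin N → Fin 2) ℂ,
        ρ.PosSemidef ∧ ρ.trace = 1 ∧ ∀ j, x j = ((ρ * kronPow (pauli j) N).trace).re}
      = tet ((-1 : ℝ)^(N/2)) := by
  have hNne : N ≠ 0 := by omega
  obtain ⟨m, hm⟩ := hN
  have hNe : Even N := ⟨m, hm⟩
  have hm2 : N / 2 = m := by omega
  set p : ℝ := (-1:ℝ)^(N/2) with hpdef
  have hs1 : p = 1 ∨ p = -1 := by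
    rcases Nat.even_or_odd (N/2) with h | h
    · left; exact h.neg_one_pow
    · right; exact h.neg_one_pow
  have hI : Complex.I ^ N = (p : ℂ) := by
    rw [hpdef, hm2, hm, ← two_mul, pow_mul, Complex.I_sq]
    push_cast
    ring
  have hAH : ∀ j : Fin 3, (kronPow (pauli j) N)ᴴ = kronPow (pauli j) N := fun j => by
    rw [kronPow_conjTranspose, pauli_conjTranspose]
  have part1 : ∀ ρ : Matrix (Fin N → Fin 2) (Fin N → Fin 2) ℂ, ρ.PosSemidef → ρ.trace = 1 →
      ∀ j : Fin 3, ((ρ * kronPow (pauli j) N).trace).im = 0 := by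
    intro ρ hρ _ j
    apply Complex.conj_eq_iff_im.mp
    calc (starRingEnd ℂ) ((ρ * kronPow (pauli j) N).trace)
        = ((ρ * kronPow (pauli j) N)ᴴ).trace := (Matrix.trace_conjTranspose _).symm
      _ = ((kronPow (pauli j) N) * ρ).trace := by
          rw [Matrix.conjTranspose_mul, hAH j, hρ.1.eq]
      _ = _ := Matrix.trace_mul_comm _ _
  refine ⟨part1, ?_⟩
  rw [tet_eq p hs1]
  ext x
  simp only [Set.mem_setOf_eq]
  constructor
  · rintro ⟨ρ, hρ, htr, hx⟩
    have key : ∀ e : Fin 3 → ℝ, (∀ j, e j = 1 ∨ e j = -1) → (e 0 * e 1 * e 2 = p) →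
        0 ≤ 1 + (e 0 * x 0 + e 1 * x 1 + e 2 * x 2) := by
      intro e he hprod
      set M : Matrix (Fin N → Fin 2) (Fin N → Fin 2) ℂ :=
        1 + ((e 0 : ℂ) • kronPow (pauli 0) N + (e 1 : ℂ) • kronPow (pauli 1) N
          + (e 2 : ℂ) • kronPow (pauli 2) N) with hM
      have hpsd : M.PosSemidef := by
        refine psd_of_herm_sq ?_ ?_
        · rw [hM]
          simp only [Matrix.conjTranspose_add, Matrix.conjTranspose_smul,
            Matrix.conjTranspose_one, kronPow_conjTranspose, pauli_conjTranspose,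
            Complex.star_def, Complex.conj_ofReal]
        · rw [hM]
          exact proj_sq N hNe (p:ℂ) hI (fun j => ((e j : ℝ) : ℂ))
            (fun j => by rcases he j with h | h <;> simp [h])
            (by show (e 0:ℂ)*(e 1:ℂ)*(e 2:ℂ) = _; exact_mod_cast hprod)
      have h0 := trace_mul_re_nonneg hρ hpsd
      have hre : ((ρ * M).trace).re = 1 + (e 0 * x 0 + e 1 * x 1 + e 2 * x 2) := by
        rw [hM]
        simp only [mul_add, mul_one, Matrix.trace_add, Matrix.mul_smul, Matrix.trace_smul,
          smul_eq_mul, htr, Complex.add_re, Complex.one_re, Complex.re_ofReal_mul]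
        rw [← hx 0, ← hx 1, ← hx 2]
      rw [hre] at h0
      exact h0
    have k1 := key ![1, p, 1]
      (by intro j; fin_cases j <;> rcases hs1 with h | h <;> simp [h])
      (by simp)
    have k2 := key ![-1, -p, 1]
      (by intro j; fin_cases j <;> rcases hs1 with h | h <;> simp [h])
      (by simp)
    have k3 := key ![1, -p, -1]
      (by intro j; fin_cases j <;> rcases hs1 with h | h <;> simp [h])
      (by simp)
    have k4 := key ![-1, p, -1]
      (by intro j; fin_cases j <;> rcases hs1 with h | h <;> simp [h])
      (by simp)
    simp only [Matrix.cons_val_zero, Matrix.cons_val_one, Matrix.head_cons,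
      Matrix.cons_val_two, Matrix.tail_cons] at k1 k2 k3 k4
    refine ⟨by linarith, by linarith, by linarith, by linarith⟩
  · intro hx
    refine ⟨Mstate N x, ?_, trace_Mstate N hNne x,
      fun j => by rw [trace_Mstate_mul N hNne x j, Complex.ofReal_re]⟩
    have hxt : x ∈ tet p := by rw [tet_eq p hs1]; exact hx
    have hsub : tet p ⊆ {c : Fin 3 → ℝ | (Mstate N c).PosSemidef} := by
      apply convexHull_min
      · intro v hv
        simp only [Set.mem_insert_iff, Set.mem_singleton_iff] at hv
        have hentry : ∀ w : Fin 3 → ℝ, (∀ j, w j = 1 ∨ w j = -1) → (w 0 * w 1 * w 2 = p) →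
            (Mstate N w).PosSemidef := fun w h1 h2 => mstate_psd N hNe hNne p hI w h1 h2
        rcases hv with rfl | rfl | rfl | rfl <;>
          [ exact hentry _ (by intro j; fin_cases j <;> rcases hs1 with h | h <;> simp [h]) (by simp);
            exact hentry _ (by intro j; fin_cases j <;> rcases hs1 with h | h <;> simp [h]) (by simp);
            exact hentry _ (by intro j; fin_cases j <;> rcases hs1 with h | h <;> simp [h]) (by simp);
            exact hentry _ (by intro j; fin_cases j <;> rcases hs1 with h | h <;> simp [h]) (by simp)]
      · intro c hc d hd a b ha hb hab
        have hb' : b = 1 - a := by linarith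
        subst hb'
        have hcomb : Mstate N (a • c + (1-a) • d)
            = (a:ℂ) • Mstate N c + ((1-a:ℝ):ℂ) • Mstate N d := by
          rw [Mstate, Mstate, Mstate, Fin.sum_univ_three, Fin.sum_univ_three,
            Fin.sum_univ_three]
          simp only [Pi.add_apply, Pi.smul_apply, smul_eq_mul, Complex.ofReal_add,
            Complex.ofReal_mul]
          generalize ((2:ℂ) ^ N)⁻¹ = t
          match_scalars <;> push_cast <;> ring1
        rw [Set.mem_setOf_eq, hcomb]
        exact (psd_smul hc ha).add (psd_smul hd hb)

    exact hsub hxt
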